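/- Let m, c, n₀, γ > 0. Then c ∫_{ℝ³} (p⁰)² J(p) dp = n₀ m² c³ [3K₃(γ) + γK₂(γ)] / (γ K₂(γ)). -/

import Mathlib

noncomputable section

open MeasureTheory

/-- Euclidean inner product on ℝ³. -/
def dot3 (p q : Fin 3 → ℝ) : ℝ := ∑ i, p i * q i

/-- The relativistic energy `p⁰ = √(m²c² + |p|²)`. -/
noncomputable def pZero (m c : ℝ) (p : Fin 3 → ℝ) : ℝ :=
  Real.sqrt (m ^ 2 * c ^ 2 + dot3 p p)

/-- Modified Bessel function of the second kind (integral formula). -/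
noncomputable def Kbessel (j : ℕ) (γ : ℝ) : ℝ :=
  (2 ^ j * (Nat.factorial j : ℝ) / (Nat.factorial (2 * j) : ℝ)) * γ ^ (-(j : ℤ)) *
    ∫ l in Set.Ioi γ, Real.exp (-l) * (l ^ 2 - γ ^ 2) ^ ((j : ℝ) - 1 / 2)

/-- The rest-frame relativistic Maxwellian (Jüttner distribution)
`J(p) = [n₀γ/(4πm³c³K₂(γ))] exp(−γp⁰/(mc))`. -/
noncomputable def Juttner (m c n₀ γ : ℝ) (p : Fin 3 → ℝ) : ℝ :=
  n₀ * γ / (4 * Real.pi * m ^ 3 * c ^ 3 * Kbessel 2 γ) *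
    Real.exp (-(γ * pZero m c p) / (m * c))

section Aux

open Real Set MeasureTheory Filter Topology


lemma myIntOn (γ : ℝ) (hγ : 0 < γ) (n : ℕ) (r : ℝ) (hr : 0 ≤ r) :
    IntegrableOn (fun l => l ^ n * Real.exp (-l) * (l ^ 2 - γ ^ 2) ^ r) (Set.Ioi γ) := by
  have hbig : IntegrableOn (fun l => Real.exp (-l) * l ^ ((n : ℝ) + 2 * r)) (Set.Ioi γ) := by
    have h := Real.GammaIntegral_convergent (s := (n : ℝ) + 2 * r + 1) (by positivity)
    have h2 := h.mono_set (Set.Ioi_subset_Ioi hγ.le)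
    simpa using h2
  refine hbig.mono' ?_ ?_
  · apply ContinuousOn.aestronglyMeasurable ?_ measurableSet_Ioi
    apply ContinuousOn.mul (by fun_prop)
    apply ContinuousOn.rpow_const (by fun_prop)
    intro l hl
    have : γ < l := hl
    left; nlinarith
  · filter_upwards [MeasureTheory.ae_restrict_mem measurableSet_Ioi] with l hl
    have hl' : γ < l := hl
    have hl0 : 0 < l := hγ.trans hl'
    have h1 : 0 ≤ l ^ 2 - γ ^ 2 := by nlinarith
    rw [Real.norm_eq_abs, abs_of_nonneg (by positivity)]
    have h2 : (l ^ 2 - γ ^ 2) ^ r ≤ l ^ (2 * r) := by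
      have : l ^ (2 * r) = (l ^ (2:ℕ)) ^ r := by
        rw [← Real.rpow_natCast l 2, ← Real.rpow_mul hl0.le]; norm_num
      rw [this]
      exact Real.rpow_le_rpow h1 (by nlinarith) hr
    calc l ^ n * Real.exp (-l) * (l ^ 2 - γ ^ 2) ^ r
        ≤ l ^ n * Real.exp (-l) * l ^ (2 * r) := by gcongr <;> positivity
      _ = Real.exp (-l) * l ^ ((n : ℝ) + 2 * r) := by
          rw [Real.rpow_add hl0, Real.rpow_natCast]; ring

lemma myJ1 (γ : ℝ) (hγ : 0 < γ) :
    ∫ l in Ioi γ, l ^ 3 * Real.exp (-l) * (l ^ 2 - γ ^ 2) ^ ((1:ℝ)/2)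
      = (1/5) * (∫ l in Ioi γ, Real.exp (-l) * (l ^ 2 - γ ^ 2) ^ ((5:ℝ)/2))
        + (γ^2/3) * (∫ l in Ioi γ, Real.exp (-l) * (l ^ 2 - γ ^ 2) ^ ((3:ℝ)/2)) := by
  set F : ℝ → ℝ := fun l => Real.exp (-l) *
      ((2/15) * (l^2-γ^2) ^ ((5:ℝ)/2) - l^2/3 * (l^2-γ^2) ^ ((3:ℝ)/2)) with hF
  set F' : ℝ → ℝ := fun l =>
      (1/5) * (Real.exp (-l) * (l^2-γ^2) ^ ((5:ℝ)/2))
      + (γ^2/3) * (Real.exp (-l) * (l^2-γ^2) ^ ((3:ℝ)/2))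
      - l ^ 3 * Real.exp (-l) * (l^2-γ^2) ^ ((1:ℝ)/2) with hF'
  have i1 : IntegrableOn (fun l => Real.exp (-l) * (l^2-γ^2) ^ ((5:ℝ)/2)) (Ioi γ) := by
    simpa using myIntOn γ hγ 0 ((5:ℝ)/2) (by norm_num)
  have i2 : IntegrableOn (fun l => Real.exp (-l) * (l^2-γ^2) ^ ((3:ℝ)/2)) (Ioi γ) := by
    simpa using myIntOn γ hγ 0 ((3:ℝ)/2) (by norm_num)
  have i3 : IntegrableOn (fun l => l ^ 3 * Real.exp (-l) * (l^2-γ^2) ^ ((1:ℝ)/2)) (Ioi γ) :=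
    myIntOn γ hγ 3 ((1:ℝ)/2) (by norm_num)
  have hderiv : ∀ l ∈ Ioi γ, HasDerivAt F (F' l) l := by
    intro l hl
    have hl' : γ < l := hl
    have hl0 : 0 < l := hγ.trans hl'
    have hu : 0 < l^2 - γ^2 := by nlinarith
    have hU : HasDerivAt (fun l : ℝ => l^2 - γ^2) (2*l) l := by
      simpa using (hasDerivAt_pow 2 l).sub_const (γ^2)
    have h52 : HasDerivAt (fun l : ℝ => (l^2-γ^2) ^ ((5:ℝ)/2))
        ((5/2) * (l^2-γ^2) ^ ((3:ℝ)/2) * (2*l)) l := by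
      have := hU.rpow_const (p := (5:ℝ)/2) (Or.inl hu.ne')
      convert this using 1
      rw [show (5:ℝ)/2 - 1 = 3/2 by norm_num]
      ring
    have h32 : HasDerivAt (fun l : ℝ => (l^2-γ^2) ^ ((3:ℝ)/2))
        ((3/2) * (l^2-γ^2) ^ ((1:ℝ)/2) * (2*l)) l := by
      have := hU.rpow_const (p := (3:ℝ)/2) (Or.inl hu.ne')
      convert this using 1
      rw [show (3:ℝ)/2 - 1 = 1/2 by norm_num]
      ring
    have hsq : HasDerivAt (fun l : ℝ => l^2/3) (2*l/3) l := by
      simpa using (hasDerivAt_pow 2 l).div_const 3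
    have hG : HasDerivAt (fun l : ℝ =>
        (2/15) * (l^2-γ^2) ^ ((5:ℝ)/2) - l^2/3 * (l^2-γ^2) ^ ((3:ℝ)/2))
        ((2/15) * ((5/2) * (l^2-γ^2) ^ ((3:ℝ)/2) * (2*l))
          - (2*l/3 * (l^2-γ^2) ^ ((3:ℝ)/2)
             + l^2/3 * ((3/2) * (l^2-γ^2) ^ ((1:ℝ)/2) * (2*l)))) l :=
      (h52.const_mul _).sub (hsq.mul h32)
    have hE : HasDerivAt (fun l : ℝ => Real.exp (-l)) (-Real.exp (-l)) l := by
      simpa using (hasDerivAt_neg l).exp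
    have := hE.mul hG
    refine HasDerivAt.congr_deriv this ?_
    have e5 : (l^2-γ^2) ^ ((5:ℝ)/2) = (l^2-γ^2) * (l^2-γ^2) ^ ((3:ℝ)/2) := by
      rw [show (5:ℝ)/2 = 1 + 3/2 by norm_num, Real.rpow_add hu, Real.rpow_one]
    have e3 : (l^2-γ^2) ^ ((3:ℝ)/2) = (l^2-γ^2) * (l^2-γ^2) ^ ((1:ℝ)/2) := by
      rw [show (3:ℝ)/2 = 1 + 1/2 by norm_num, Real.rpow_add hu, Real.rpow_one]
    rw [hF']
    simp only []
    rw [e5, e3]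
    ring
  have htop : Tendsto F atTop (𝓝 0) := by
    apply squeeze_zero_norm' _ (tendsto_pow_mul_exp_neg_atTop_nhds_zero 5)
    filter_upwards [eventually_gt_atTop γ] with l hl
    have hl0 : 0 < l := hγ.trans hl
    have hu : 0 < l^2 - γ^2 := by nlinarith
    have key : ∀ k : ℕ, (l^2-γ^2) ^ ((k:ℝ)/2) ≤ l ^ k := by
      intro k
      have h1 : (l:ℝ) ^ k = (l^(2:ℕ)) ^ ((k:ℝ)/2) := by
        rw [← Real.rpow_natCast l 2, ← Real.rpow_mul hl0.le, ← Real.rpow_natCast l k]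
        congr 1
        push_cast
        ring
      rw [h1]
      exact Real.rpow_le_rpow hu.le (by nlinarith) (by positivity)
    have k5 := key 5
    have k3 := key 3
    norm_num at k5 k3
    have n5 : (0:ℝ) ≤ (l^2-γ^2) ^ ((5:ℝ)/2) := Real.rpow_nonneg hu.le _
    have n3 : (0:ℝ) ≤ (l^2-γ^2) ^ ((3:ℝ)/2) := Real.rpow_nonneg hu.le _
    rw [hF]
    simp only [Real.norm_eq_abs, abs_mul, Real.abs_exp]
    rw [show l^5 * Real.exp (-l) = Real.exp (-l) * l^5 by ring]
    apply mul_le_mul_of_nonneg_left _ (Real.exp_pos _).le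
    rw [abs_le]
    constructor <;> nlinarith
  have hcont : ContinuousWithinAt F (Ici γ) γ := by
    apply ContinuousAt.continuousWithinAt
    have c5 : ContinuousAt (fun l : ℝ => (l^2-γ^2) ^ ((5:ℝ)/2)) γ :=
      ContinuousAt.rpow_const (by fun_prop) (Or.inr (by norm_num))
    have c3 : ContinuousAt (fun l : ℝ => (l^2-γ^2) ^ ((3:ℝ)/2)) γ :=
      ContinuousAt.rpow_const (by fun_prop) (Or.inr (by norm_num))
    exact (by fun_prop : ContinuousAt (fun l : ℝ => Real.exp (-l)) γ).mul
      ((c5.const_mul _).sub ((by fun_prop : ContinuousAt (fun l : ℝ => l^2/3) γ).mul c3))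
  have hFγ : F γ = 0 := by
    rw [hF]
    norm_num [Real.zero_rpow]
  have iF' : IntegrableOn F' (Ioi γ) := ((i1.const_mul _).add (i2.const_mul _)).sub i3
  have key := integral_Ioi_of_hasDerivAt_of_tendsto hcont hderiv iF' htop
  rw [hFγ, sub_zero] at key
  rw [hF'] at key
  beta_reduce at key
  have iAdd : IntegrableOn (fun x => 1/5 * (Real.exp (-x) * (x^2-γ^2) ^ ((5:ℝ)/2))
      + γ^2/3 * (Real.exp (-x) * (x^2-γ^2) ^ ((3:ℝ)/2))) (Ioi γ) := by
    exact (i1.const_mul _).add (i2.const_mul _)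
  rw [integral_sub iAdd i3,
    integral_add (i1.const_mul _) (i2.const_mul _),
    integral_const_mul, integral_const_mul] at key
  linarith

lemma my3d (m c γ : ℝ) (hm : 0 < m) (hc : 0 < c) (hγ : 0 < γ) :
    ∫ p : Fin 3 → ℝ, (pZero m c p) ^ 2 * Real.exp (-(γ * pZero m c p) / (m * c))
      = 4 * Real.pi * ((m*c)^5 / γ^5) *
        ∫ l in Ioi γ, l ^ 3 * Real.exp (-l) * (l ^ 2 - γ ^ 2) ^ ((1:ℝ)/2) := by
  set f : ℝ → ℝ := fun r => (m^2*c^2 + r^2) *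
      Real.exp (-(γ * Real.sqrt (m^2*c^2 + r^2)) / (m*c)) with hf
  -- Step 1: move to EuclideanSpace
  have step1 : ∫ p : Fin 3 → ℝ, (pZero m c p) ^ 2 * Real.exp (-(γ * pZero m c p) / (m * c))
      = ∫ x : EuclideanSpace ℝ (Fin 3), f ‖x‖ := by
    rw [← (EuclideanSpace.volume_preserving_symm_measurableEquiv_toLp (Fin 3)).integral_comp
      (MeasurableEquiv.measurableEmbedding _)]
    congr 1
    funext x
    have hdot : dot3 ((MeasurableEquiv.toLp 2 (Fin 3 → ℝ)).symm x)
        ((MeasurableEquiv.toLp 2 (Fin 3 → ℝ)).symm x) = ‖x‖^2 := by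
      rw [EuclideanSpace.norm_eq, Real.sq_sqrt (by positivity)]
      simp [dot3, sq_abs, pow_two]
    have hnn : (0:ℝ) ≤ m^2*c^2 + ‖x‖^2 := by positivity
    simp only [pZero, hdot, hf]
    rw [Real.sq_sqrt hnn]
  rw [step1]
  -- Step 2: polar coordinates
  rw [integral_fun_norm_addHaar (volume : Measure (EuclideanSpace ℝ (Fin 3))) f]
  have hdim : Module.finrank ℝ (EuclideanSpace ℝ (Fin 3)) = 3 := finrank_euclideanSpace_fin
  rw [hdim]
  have hvol : ((volume : Measure (EuclideanSpace ℝ (Fin 3))) (Metric.ball 0 1)).toReal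
      = 4 * Real.pi / 3 := by
    rw [EuclideanSpace.volume_ball]
    have h1 : Real.Gamma ((Fintype.card (Fin 3) : ℝ) / 2 + 1) = 3/4 * Real.sqrt π := by
      simp only [Fintype.card_fin]
      rw [show ((3:ℕ):ℝ)/2 + 1 = (1/2 + 1) + 1 by norm_num]
      rw [Real.Gamma_add_one (by norm_num), Real.Gamma_add_one (by norm_num),
        Real.Gamma_one_half_eq]
      ring
    rw [h1]
    simp only [Fintype.card_fin, ENNReal.ofReal_one, one_pow, one_mul]
    rw [ENNReal.toReal_ofReal (by positivity)]
    have hs : Real.sqrt π ^ 3 = π * Real.sqrt π := by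
      rw [pow_succ, sq_sqrt Real.pi_pos.le]
    rw [hs]
    rw [div_eq_iff (by positivity)]
    have : Real.sqrt π > 0 := Real.sqrt_pos.2 Real.pi_pos
    field_simp
  rw [measureReal_def, hvol]
  -- Step 3: substitution
  set φ : ℝ → ℝ := fun l => m*c/γ * Real.sqrt (l^2-γ^2) with hφ
  set φ' : ℝ → ℝ := fun l => m*c/γ * (2*l / (2*Real.sqrt (l^2-γ^2))) with hφ'
  have himg : φ '' Ioi γ = Ioi 0 := by
    ext t
    constructor
    · rintro ⟨l, hl, rfl⟩
      have hl' : γ < l := hl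
      have hu : 0 < l^2 - γ^2 := by nlinarith
      have : 0 < Real.sqrt (l^2-γ^2) := Real.sqrt_pos.2 hu
      exact mul_pos (by positivity) this
    · intro ht
      have ht' : (0:ℝ) < t := ht
      refine ⟨γ/(m*c) * Real.sqrt (m^2*c^2 + t^2), ?_, ?_⟩
      · have h1 : m*c < Real.sqrt (m^2*c^2 + t^2) := by
          rw [show m*c = Real.sqrt ((m*c)^2) from (Real.sqrt_sq (by positivity)).symm]
          apply Real.sqrt_lt_sqrt (by positivity)
          nlinarith
        have := mul_lt_mul_of_pos_left h1 (show (0:ℝ) < γ/(m*c) by positivity)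
        simp only [mem_Ioi]
        calc γ = γ/(m*c) * (m*c) := by field_simp
          _ < γ/(m*c) * Real.sqrt (m^2*c^2 + t^2) := this
      · have hX : (0:ℝ) ≤ m^2*c^2 + t^2 := by positivity
        rw [hφ]
        simp only
        have e1 : (γ/(m*c) * Real.sqrt (m^2*c^2 + t^2))^2 - γ^2 = (γ*t/(m*c))^2 := by
          rw [mul_pow, Real.sq_sqrt hX]
          field_simp
          ring
        rw [e1, Real.sqrt_sq (by positivity)]
        field_simp
  have hder : ∀ l ∈ Ioi γ, HasDerivWithinAt φ (φ' l) (Ioi γ) l := by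
    intro l hl
    have hl' : γ < l := hl
    have hu : 0 < l^2 - γ^2 := by nlinarith
    have hU : HasDerivAt (fun l : ℝ => l^2 - γ^2) (2*l) l := by
      simpa using (hasDerivAt_pow 2 l).sub_const (γ^2)
    exact (((hU.sqrt hu.ne').const_mul (m*c/γ)).hasDerivWithinAt)
  have hinj : InjOn φ (Ioi γ) := by
    intro a ha b hb hab
    have ha' : γ < a := ha
    have hb' : γ < b := hb
    have hua : (0:ℝ) ≤ a^2 - γ^2 := by nlinarith
    have hub : (0:ℝ) ≤ b^2 - γ^2 := by nlinarith
    rw [hφ] at hab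
    simp only at hab
    have hmc : m*c/γ ≠ 0 := by positivity
    have h1 : Real.sqrt (a^2-γ^2) = Real.sqrt (b^2-γ^2) := mul_left_cancel₀ hmc hab
    have h2 : a^2 - γ^2 = b^2 - γ^2 := by
      rw [← Real.sq_sqrt hua, ← Real.sq_sqrt hub, h1]
    apply le_antisymm <;> nlinarith
  rw [← himg, integral_image_eq_integral_abs_deriv_smul measurableSet_Ioi hder hinj]
  rw [setIntegral_congr_fun measurableSet_Ioi (g := fun l =>
      (m*c)^5/γ^5 * (l ^ 3 * Real.exp (-l) * (l ^ 2 - γ ^ 2) ^ ((1:ℝ)/2))) ?_]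
  · rw [integral_const_mul]
    simp only [nsmul_eq_mul, smul_eq_mul]
    push_cast
    ring
  · intro l hl
    have hl' : γ < l := hl
    have hl0 : 0 < l := hγ.trans hl'
    have hu : 0 < l^2 - γ^2 := by nlinarith
    set s := Real.sqrt (l^2-γ^2) with hs
    have hs0 : 0 < s := Real.sqrt_pos.2 hu
    have hs2 : s^2 = l^2 - γ^2 := Real.sq_sqrt hu.le
    simp only [hφ, hφ', smul_eq_mul, hf]
    have e1 : m^2*c^2 + (m*c/γ * s)^2 = ((m*c/γ)*l)^2 := by
      rw [mul_pow, hs2]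
      field_simp
      ring
    rw [e1, Real.sqrt_sq (by positivity)]
    have e2 : -(γ * (m*c/γ*l))/(m*c) = -l := by
      field_simp
    rw [e2]
    have e3 : (l^2-γ^2) ^ ((1:ℝ)/2) = s := (Real.sqrt_eq_rpow _).symm
    rw [e3]
    rw [abs_of_pos (by positivity)]
    rw [← hs2]
    field_simp
    rw [Real.sqrt_sq hs0.le]
    have hγ2 : γ^2 * γ⁻¹^2 = 1 := by rw [← mul_pow, mul_inv_cancel₀ hγ.ne', one_pow]
    linear_combination (m^2*c^2*s^2) * hγ2

lemma myPos (γ : ℝ) (hγ : 0 < γ) :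
    0 < ∫ l in Ioi γ, Real.exp (-l) * (l ^ 2 - γ ^ 2) ^ ((3:ℝ)/2) := by
  have i2 : IntegrableOn (fun l => Real.exp (-l) * (l^2-γ^2) ^ ((3:ℝ)/2)) (Ioi γ) := by
    simpa using myIntOn γ hγ 0 ((3:ℝ)/2) (by norm_num)
  have hsub : Ioi γ ⊆ Function.support
      (fun l => Real.exp (-l) * (l^2-γ^2) ^ ((3:ℝ)/2)) ∩ Ioi γ := by
    intro l hl
    have hl' : γ < l := hl
    have hu : 0 < l^2-γ^2 := by nlinarith
    exact ⟨ne_of_gt (mul_pos (Real.exp_pos _) (Real.rpow_pos_of_pos hu _)), hl⟩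
  rw [setIntegral_pos_iff_support_of_nonneg_ae ?_ i2]
  · calc (0:ENNReal) < volume (Ioi γ) := by rw [Real.volume_Ioi]; exact ENNReal.zero_lt_top
      _ ≤ _ := measure_mono hsub
  · filter_upwards [ae_restrict_mem measurableSet_Ioi] with l hl
    have hl' : γ < l := hl
    have hu : 0 < l^2-γ^2 := by nlinarith
    exact (mul_pos (Real.exp_pos _) (Real.rpow_pos_of_pos hu _)).le

end Aux

open Real Set MeasureTheory in
/-- `c ∫_{ℝ³} (p⁰)² J(p) dp = n₀m²c³[3K₃(γ) + γK₂(γ)]/(γK₂(γ))`. -/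
theorem stmt9 (m c n₀ γ : ℝ) (hm : 0 < m) (hc : 0 < c) (hn : 0 < n₀) (hγ : 0 < γ) :
    c * ∫ p : Fin 3 → ℝ, (pZero m c p) ^ 2 * Juttner m c n₀ γ p
      = n₀ * m ^ 2 * c ^ 3 * (3 * Kbessel 3 γ + γ * Kbessel 2 γ) / (γ * Kbessel 2 γ) := by
  set I2 := ∫ l in Ioi γ, Real.exp (-l) * (l ^ 2 - γ ^ 2) ^ ((3:ℝ)/2) with hI2
  set I3 := ∫ l in Ioi γ, Real.exp (-l) * (l ^ 2 - γ ^ 2) ^ ((5:ℝ)/2) with hI3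
  have hK2 : I2 = 3 * γ^2 * Kbessel 2 γ := by
    rw [Kbessel]
    have he : ∫ l in Ioi γ, Real.exp (-l) * (l ^ 2 - γ ^ 2) ^ (((2:ℕ):ℝ) - 1 / 2) = I2 := by
      norm_num [hI2]
    rw [he]
    rw [show (-((2:ℕ):ℤ)) = -2 by norm_num, zpow_neg]
    have h2 : (γ:ℝ) ^ (2:ℤ) = γ^(2:ℕ) := by norm_cast
    rw [h2]
    norm_num [Nat.factorial]
    field_simp
  have hK3 : I3 = 15 * γ^3 * Kbessel 3 γ := by
    rw [Kbessel]
    have he : ∫ l in Ioi γ, Real.exp (-l) * (l ^ 2 - γ ^ 2) ^ (((3:ℕ):ℝ) - 1 / 2) = I3 := by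
      norm_num [hI3]
    rw [he]
    rw [show (-((3:ℕ):ℤ)) = -3 by norm_num, zpow_neg]
    have h3 : (γ:ℝ) ^ (3:ℤ) = γ^(3:ℕ) := by norm_cast
    rw [h3]
    norm_num [Nat.factorial]
    field_simp
  have hI2pos : 0 < I2 := myPos γ hγ
  have hK2pos : 0 < Kbessel 2 γ := by
    have := hK2
    nlinarith
  have hπ : Real.pi > 0 := Real.pi_pos
  have hint : ∀ p : Fin 3 → ℝ, (pZero m c p)^2 * Juttner m c n₀ γ p
      = (n₀*γ/(4*Real.pi*m^3*c^3*Kbessel 2 γ))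
        * ((pZero m c p)^2 * Real.exp (-(γ * pZero m c p)/(m*c))) := by
    intro p
    rw [Juttner]
    ring
  simp_rw [hint]
  rw [integral_const_mul, my3d m c γ hm hc hγ, myJ1 γ hγ]
  rw [← hI2, ← hI3, hK2, hK3]
  have hK2ne : Kbessel 2 γ ≠ 0 := ne_of_gt hK2pos
  field_simp
  ring
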